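/- Consider the two-player game with strategy space [0,1] for each player, qualities Q_1(x_1,x_2) = 0.5·x_1 and Q_2(x_1,x_2) = x_1·x_2, and Tullock allocation: if Q_1(x) + Q_2(x) > 0 then player i receives T_i(x) = Q_i(x)/(Q_1(x)+Q_2(x)), while if Q_1(x) = Q_2(x) = 0 then each player receives T_i(x) = 1/2. Utilities are U_i(x_1,x_2) = T_i(x_1,x_2) − 0.25·x_i for i = 1,2. Then this game has no pure Nash equilibrium: there is no (x_1*, x_2*) ∈ [0,1]² such that U_1(x_1*,x_2*) ≥ U_1(x_1,x_2*) for all x_1 ∈ [0,1] and U_2(x_1*,x_2*) ≥ U_2(x_1*,x_2) for all x_2 ∈ [0,1]. -/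

import Mathlib

/-- Quality of player 1: `Q₁(x₁,x₂) = 0.5·x₁`. -/
noncomputable def tullockQ1 (x₁ x₂ : ℝ) : ℝ := 0.5 * x₁

/-- Quality of player 2: `Q₂(x₁,x₂) = x₁·x₂`. -/
noncomputable def tullockQ2 (x₁ x₂ : ℝ) : ℝ := x₁ * x₂

open Classical in
/-- Tullock share of player `i ∈ {1,2}` given qualities `Q₁, Q₂`:
proportional allocation when total quality is positive, uniform split otherwise. -/
noncomputable def tullockShare (Q1 Q2 : ℝ) : ℝ :=
  if Q1 + Q2 > 0 then Q1 / (Q1 + Q2) else 1 / 2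

/-- Utility of player 1 under the Tullock mechanism. -/
noncomputable def tullockU1 (x₁ x₂ : ℝ) : ℝ :=
  tullockShare (tullockQ1 x₁ x₂) (tullockQ2 x₁ x₂) - 0.25 * x₁

/-- Utility of player 2 under the Tullock mechanism. -/
noncomputable def tullockU2 (x₁ x₂ : ℝ) : ℝ :=
  tullockShare (tullockQ2 x₁ x₂) (tullockQ1 x₁ x₂) - 0.25 * x₂

/-- The two-player Tullock game with qualities
`Q₁ = 0.5·x₁`, `Q₂ = x₁·x₂` and costs `0.25·xᵢ` has no pure Nash equilibrium. -/
theorem tullock_no_pure_nash_equilibrium :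
    ¬ ∃ x₁ x₂ : ℝ, x₁ ∈ Set.Icc (0 : ℝ) 1 ∧ x₂ ∈ Set.Icc (0 : ℝ) 1 ∧
      (∀ y ∈ Set.Icc (0 : ℝ) 1, tullockU1 y x₂ ≤ tullockU1 x₁ x₂) ∧
      (∀ y ∈ Set.Icc (0 : ℝ) 1, tullockU2 x₁ y ≤ tullockU2 x₁ x₂) := by
  rintro ⟨x₁, x₂, ⟨h1l, h1u⟩, ⟨h2l, h2u⟩, hN1, hN2⟩
  by_cases hx1 : x₁ = 0
  · subst hx1
    have hU2 : ∀ y : ℝ, tullockU2 0 y = 1/2 - 0.25*y := by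
      intro y
      simp [tullockU2, tullockShare, tullockQ1, tullockQ2]
    have h0 := hN2 0 ⟨le_refl _, by norm_num⟩
    rw [hU2, hU2] at h0
    have hx2 : x₂ = 0 := by linarith
    subst hx2
    have h1 := hN1 1 ⟨by norm_num, le_refl _⟩
    have e1 : tullockU1 1 0 = 0.75 := by
      simp [tullockU1, tullockShare, tullockQ1, tullockQ2]
      norm_num
    have e0 : tullockU1 0 0 = 1/2 := by
      simp [tullockU1, tullockShare, tullockQ1, tullockQ2]
    rw [e1, e0] at h1
    linarith
  · have hx1pos : 0 < x₁ := lt_of_le_of_ne h1l (Ne.symm hx1)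
    have hden : (0:ℝ) < 0.5 + x₂ := by linarith
    have eU1 : ∀ y : ℝ, 0 < y → tullockU1 y x₂ = 0.5/(0.5+x₂) - 0.25*y := by
      intro y hy
      have hpos : 0.5*y + y*x₂ > 0 := by nlinarith
      rw [tullockU1, tullockShare, if_pos (show tullockQ1 y x₂ + tullockQ2 y x₂ > 0 from hpos)]
      simp only [tullockU1, tullockShare, tullockQ1, tullockQ2, if_pos hpos]
      have e : 0.5 * y / (0.5 * y + y * x₂) = 0.5 / (0.5 + x₂) := by
        rw [div_eq_div_iff hpos.ne' hden.ne']; ring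
      rw [e]
    have eU10 : tullockU1 0 x₂ = 1/2 := by
      simp [tullockU1, tullockShare, tullockQ1, tullockQ2]
    have h := hN1 0 ⟨le_refl _, by norm_num⟩
    rw [eU10, eU1 x₁ hx1pos] at h
    have hx2lt : x₂ < 1/2 := by
      have hgt : 1/2 < 0.5/(0.5+x₂) := by linarith
      rw [lt_div_iff₀ hden] at hgt
      linarith
    have eU2 : ∀ y : ℝ, 0 ≤ y → tullockU2 x₁ y = y/(0.5+y) - 0.25*y := by
      intro y hy
      have hpos : x₁*y + 0.5*x₁ > 0 := by nlinarith
      have hdy : (0:ℝ) < 0.5 + y := by linarith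
      rw [tullockU2, tullockShare, if_pos (show tullockQ2 x₁ y + tullockQ1 x₁ y > 0 from hpos)]
      simp only [tullockU2, tullockShare, tullockQ1, tullockQ2, if_pos hpos]
      have e : x₁ * y / (x₁ * y + 0.5 * x₁) = y / (0.5 + y) := by
        rw [div_eq_div_iff hpos.ne' hdy.ne']; ring
      rw [e]
    have h2 := hN2 (1/2) ⟨by norm_num, by norm_num⟩
    rw [eU2 (1/2) (by norm_num), eU2 x₂ h2l] at h2
    have hmul : x₂ / (0.5+x₂) * (0.5+x₂) = x₂ := div_mul_cancel₀ _ (ne_of_gt hden)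
    norm_num at h2
    nlinarith [h2, hmul, hden, hx2lt, mul_pos hden hden]
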